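/- Under the same setting, the projected difference quotients Pz_ℓ^j = P((u_j(t+h_ℓ) − φ_j)/h_ℓ) converge strongly in V, as ℓ → ∞, to the unique z_*^j ∈ PV satisfying C_t(z_*^j, v) = −Ċ^{*j}_t(φ_j, v) for all v ∈ PV; moreover this identity then holds for all v ∈ V. -/

import Mathlib

open Filter Topology

/-- Scale a pointwise-on-unit-ball bound for a bilinear form to all vectors. -/
lemma hadamard13_bilin_scale {W : Type*} [NormedAddCommGroup W] [NormedSpace ℝ W]
    (f : W →ₗ[ℝ] W →ₗ[ℝ] ℝ) (ε : ℝ) (hε : 0 ≤ ε)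
    (h : ∀ u v : W, ‖u‖ ≤ 1 → ‖v‖ ≤ 1 → |f u v| ≤ ε) :
    ∀ u v : W, |f u v| ≤ ε * ‖u‖ * ‖v‖ := by
  intro u v
  rcases eq_or_ne u 0 with rfl | hu
  · simp [hε]
  rcases eq_or_ne v 0 with rfl | hv
  · simp
  have hu' : (0:ℝ) < ‖u‖ := norm_pos_iff.mpr hu
  have hv' : (0:ℝ) < ‖v‖ := norm_pos_iff.mpr hv
  have h1 : |f (‖u‖⁻¹ • u) (‖v‖⁻¹ • v)| ≤ ε := by
    apply h
    · rw [norm_smul, norm_inv, norm_norm, inv_mul_cancel₀ hu'.ne']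
    · rw [norm_smul, norm_inv, norm_norm, inv_mul_cancel₀ hv'.ne']
  have h2 : f (‖u‖⁻¹ • u) (‖v‖⁻¹ • v) = ‖u‖⁻¹ * (‖v‖⁻¹ * f u v) := by
    simp only [map_smul, LinearMap.smul_apply, smul_eq_mul]
    ring
  rw [h2, abs_mul, abs_mul, abs_inv, abs_inv, abs_norm, abs_norm] at h1
  calc |f u v| = ‖u‖ * ‖v‖ * (‖u‖⁻¹ * (‖v‖⁻¹ * |f u v|)) := by field_simp
    _ ≤ ‖u‖ * ‖v‖ * ε := mul_le_mul_of_nonneg_left h1 (by positivity)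
    _ = ε * ‖u‖ * ‖v‖ := by ring

/-- The key coercive estimate on `PV` from compactness. -/
lemma hadamard13_estimate {V : Type*} [NormedAddCommGroup V] [NormedSpace ℝ V]
    [CompleteSpace V]
    {X : Type*} [NormedAddCommGroup X] [NormedSpace ℝ X]
    (ι : V →L[ℝ] X) (hcompact : IsCompactOperator ι)
    (G : V →L[ℝ] V →L[ℝ] ℝ) (P : V →L[ℝ] V)
    (δ Cb : ℝ) (hδ : 0 < δ) (hCb : 0 ≤ Cb)
    (hcoer : ∀ d : V, δ * ‖d‖ ^ 2 ≤ G d d + Cb * ‖ι d‖ ^ 2)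
    (hker : ∀ w : V, P w = w → G w = 0 → w = 0) :
    ∃ c > 0, ∀ z : V, P z = z → c * ‖z‖ ≤ ‖G z‖ := by
  by_contra hcon
  push_neg at hcon
  have hsel : ∀ n : ℕ, ∃ w : V, P w = w ∧ ‖w‖ = 1 ∧ ‖G w‖ < ((n : ℝ) + 1)⁻¹ := by
    intro n
    obtain ⟨z, hPz, hz⟩ := hcon ((n : ℝ) + 1)⁻¹ (by positivity)
    have hz0 : ‖z‖ ≠ 0 := by
      intro h0
      rw [h0, mul_zero] at hz
      exact (norm_nonneg _).not_gt hz
    have hzpos : (0:ℝ) < ‖z‖ := lt_of_le_of_ne (norm_nonneg z) (Ne.symm hz0)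
    refine ⟨‖z‖⁻¹ • z, ?_, ?_, ?_⟩
    · rw [map_smul, hPz]
    · rw [norm_smul, norm_inv, norm_norm, inv_mul_cancel₀ hz0]
    · rw [map_smul, norm_smul (‖z‖⁻¹) (G z), norm_inv, norm_norm]
      calc ‖z‖⁻¹ * ‖G z‖ < ‖z‖⁻¹ * (((n : ℝ) + 1)⁻¹ * ‖z‖) := by
            exact mul_lt_mul_of_pos_left hz (inv_pos.mpr hzpos)
        _ = ((n : ℝ) + 1)⁻¹ := by field_simp
  choose w hPw hwnorm hGw using hsel
  obtain ⟨K, hK, hKmem⟩ := hcompact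
  obtain ⟨r, hr, hball⟩ := Metric.mem_nhds_iff.mp hKmem
  have hs0 : (0:ℝ) < r / 2 := by linarith
  have hmem : ∀ n, ι ((r/2) • w n) ∈ K := by
    intro n
    apply hball
    simp only [Metric.mem_ball, dist_zero_right, norm_smul, hwnorm n, mul_one,
      Real.norm_eq_abs, abs_of_pos hs0]
    linarith
  obtain ⟨a, _, ψ, hψ, hconv⟩ := hK.tendsto_subseq hmem
  have hιconv : Tendsto (fun k => ι (w (ψ k))) atTop (𝓝 ((r/2)⁻¹ • a)) := by
    have h1 : Tendsto (fun k => (r/2)⁻¹ • (ι ((r/2) • w (ψ k)))) atTop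
        (𝓝 ((r/2)⁻¹ • a)) := hconv.const_smul _
    refine h1.congr fun k => ?_
    rw [map_smul, smul_smul, inv_mul_cancel₀ hs0.ne', one_smul]
  have hιcauchy : CauchySeq (fun k => ι (w (ψ k))) := hιconv.cauchySeq
  have hwc : CauchySeq (fun k => w (ψ k)) := by
    rw [Metric.cauchySeq_iff]
    intro ε hε
    obtain ⟨ε', hε', hε'sq⟩ : ∃ e : ℝ, 0 < e ∧ e ^ 2 = δ * ε ^ 2 / (4 * (Cb + 1)) :=
      ⟨Real.sqrt (δ * ε ^ 2 / (4 * (Cb + 1))), Real.sqrt_pos.mpr (by positivity),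
        Real.sq_sqrt (by positivity)⟩
    obtain ⟨N₁, hN₁⟩ := Metric.cauchySeq_iff.mp hιcauchy ε' hε'
    obtain ⟨N₂, hN₂⟩ := exists_nat_gt (16 / (δ * ε ^ 2))
    refine ⟨max N₁ N₂, fun m hm n hn => ?_⟩
    set d := w (ψ m) - w (ψ n) with hd
    clear_value d
    have h1 : δ * ‖d‖ ^ 2 ≤ G d d + Cb * ‖ι d‖ ^ 2 := hcoer d
    have hGdd : G d d = (G (w (ψ m))) d - (G (w (ψ n))) d := by
      rw [hd, show G (w (ψ m) - w (ψ n)) = G (w (ψ m)) - G (w (ψ n)) from map_sub G _ _,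
        ContinuousLinearMap.sub_apply]
    have hdle : ‖d‖ ≤ 2 := by
      rw [hd]
      calc ‖w (ψ m) - w (ψ n)‖ ≤ ‖w (ψ m)‖ + ‖w (ψ n)‖ := norm_sub_le _ _
        _ = 2 := by rw [hwnorm, hwnorm]; norm_num
    have habs : |G d d| ≤ 4 * ((max N₁ N₂ : ℝ) + 1)⁻¹ := by
      have b1 : |(G (w (ψ m))) d| ≤ ‖G (w (ψ m))‖ * ‖d‖ := (G (w (ψ m))).le_opNorm d
      have b2 : |(G (w (ψ n))) d| ≤ ‖G (w (ψ n))‖ * ‖d‖ := (G (w (ψ n))).le_opNorm d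
      have c1 : ‖G (w (ψ m))‖ < ((max N₁ N₂ : ℝ) + 1)⁻¹ := by
        refine (hGw (ψ m)).trans_le ?_
        apply inv_anti₀ (by positivity)
        have : (max N₁ N₂ : ℝ) ≤ ψ m := by
          exact_mod_cast le_trans hm (hψ.le_apply)
        linarith
      have c2 : ‖G (w (ψ n))‖ < ((max N₁ N₂ : ℝ) + 1)⁻¹ := by
        refine (hGw (ψ n)).trans_le ?_
        apply inv_anti₀ (by positivity)
        have : (max N₁ N₂ : ℝ) ≤ ψ n := by
          exact_mod_cast le_trans hn (hψ.le_apply)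
        linarith
      rw [hGdd]
      have hd0 : (0:ℝ) ≤ ‖d‖ := norm_nonneg d
      calc |(G (w (ψ m))) d - (G (w (ψ n))) d|
          ≤ |(G (w (ψ m))) d| + |(G (w (ψ n))) d| := abs_sub _ _
        _ ≤ ‖G (w (ψ m))‖ * ‖d‖ + ‖G (w (ψ n))‖ * ‖d‖ := add_le_add b1 b2
        _ ≤ ((max N₁ N₂ : ℝ) + 1)⁻¹ * 2 + ((max N₁ N₂ : ℝ) + 1)⁻¹ * 2 := by
            have d1 : ‖G (w (ψ m))‖ * ‖d‖ ≤ ((max N₁ N₂ : ℝ) + 1)⁻¹ * 2 :=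
              mul_le_mul c1.le hdle hd0 (by positivity)
            have d2 : ‖G (w (ψ n))‖ * ‖d‖ ≤ ((max N₁ N₂ : ℝ) + 1)⁻¹ * 2 :=
              mul_le_mul c2.le hdle hd0 (by positivity)
            linarith
        _ = 4 * ((max N₁ N₂ : ℝ) + 1)⁻¹ := by ring
    have hιd : ‖ι d‖ < ε' := by
      have := hN₁ m (le_trans (le_max_left _ _) hm) n (le_trans (le_max_left _ _) hn)
      rw [hd]
      rwa [dist_eq_norm, ← map_sub] at this
    have hsmall : 4 * ((max N₁ N₂ : ℝ) + 1)⁻¹ ≤ δ * ε ^ 2 / 4 := by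
      have hpos : (0:ℝ) < (max N₁ N₂ : ℝ) + 1 := by positivity
      have hN2' : 16 / (δ * ε ^ 2) < (max N₁ N₂ : ℝ) + 1 := by
        have : (N₂ : ℝ) ≤ max (N₁ : ℝ) (N₂ : ℝ) := le_max_right _ _
        linarith
      rw [div_lt_iff₀ (by positivity)] at hN2'
      rw [← div_eq_mul_inv, div_le_div_iff₀ hpos (by norm_num : (0:ℝ) < 4)]
      nlinarith
    have hsq : Cb * ‖ι d‖ ^ 2 ≤ δ * ε ^ 2 / 4 := by
      have h3 : ‖ι d‖ ^ 2 ≤ ε' ^ 2 := pow_le_pow_left₀ (norm_nonneg _) hιd.le 2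
      calc Cb * ‖ι d‖ ^ 2 ≤ Cb * ε' ^ 2 := mul_le_mul_of_nonneg_left h3 hCb
        _ ≤ (Cb + 1) * ε' ^ 2 := by nlinarith [sq_nonneg ε']
        _ = δ * ε ^ 2 / 4 := by
            rw [hε'sq, mul_div_assoc',
              div_eq_div_iff (by positivity : (0:ℝ) < 4 * (Cb + 1)).ne'
                (by norm_num : (4:ℝ) ≠ 0)]
            ring
    have hfinal : δ * ‖d‖ ^ 2 ≤ δ * ε ^ 2 / 2 := by
      have := (le_abs_self (G d d)).trans habs
      linarith
    have hle : ‖d‖ ^ 2 ≤ ε ^ 2 / 2 := by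
      have h9 : δ * ‖d‖ ^ 2 ≤ δ * (ε ^ 2 / 2) := by linarith
      exact (mul_le_mul_iff_right₀ hδ).mp h9
    have hsq2 : ‖d‖ ^ 2 < ε ^ 2 := by
      have := pow_pos hε 2
      linarith
    have hdlt : ‖d‖ < ε := lt_of_pow_lt_pow_left₀ 2 hε.le hsq2
    rw [dist_eq_norm, ← hd]
    exact hdlt
  obtain ⟨wl, hwl⟩ := cauchySeq_tendsto_of_complete hwc
  have hwl1 : ‖wl‖ = 1 := by
    have h1 : Tendsto (fun k => ‖w (ψ k)‖) atTop (𝓝 ‖wl‖) := hwl.norm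
    have h2 : Tendsto (fun k => ‖w (ψ k)‖) atTop (𝓝 1) := by
      have he : (fun k => ‖w (ψ k)‖) = fun _ => (1:ℝ) := funext fun k => hwnorm (ψ k)
      rw [he]; exact tendsto_const_nhds
    exact tendsto_nhds_unique h1 h2
  have hPwl : P wl = wl := by
    have h1 : Tendsto (fun k => P (w (ψ k))) atTop (𝓝 (P wl)) :=
      (P.continuous.tendsto wl).comp hwl
    have h2 : Tendsto (fun k => P (w (ψ k))) atTop (𝓝 wl) := by
      have he : (fun k => P (w (ψ k))) = fun k => w (ψ k) := funext fun k => hPw (ψ k)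
      rw [he]; exact hwl
    exact tendsto_nhds_unique h1 h2
  have hGwl : G wl = 0 := by
    have h1 : Tendsto (fun k => G (w (ψ k))) atTop (𝓝 (G wl)) :=
      (G.continuous.tendsto wl).comp hwl
    have h2 : Tendsto (fun k => G (w (ψ k))) atTop (𝓝 0) := by
      rw [tendsto_zero_iff_norm_tendsto_zero]
      have hub : ∀ k, ‖G (w (ψ k))‖ ≤ ((k : ℝ) + 1)⁻¹ := by
        intro k
        refine (hGw (ψ k)).le.trans ?_
        apply inv_anti₀ (by positivity)
        have : (k : ℝ) ≤ ψ k := by exact_mod_cast hψ.le_apply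
        linarith
      have hlb : ∀ k, (0:ℝ) ≤ ‖G (w (ψ k))‖ := fun k => norm_nonneg _
      have htend : Tendsto (fun k : ℕ => ((k : ℝ) + 1)⁻¹) atTop (𝓝 0) := by
        simpa [one_div] using tendsto_one_div_add_atTop_nhds_zero_nat (𝕜 := ℝ)
      exact squeeze_zero hlb hub htend
    exact tendsto_nhds_unique h1 h2
  have := hker wl hPwl hGwl
  rw [this] at hwl1
  simp at hwl1

/-- Arithmetic budget helper. -/
lemma hadamard13_budget (ε a b : ℝ) (hε : 0 < ε) (ha : 0 ≤ a) (hab : a ≤ b) (hb : 0 < b) :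
    ε / (7 * b) * a ≤ ε / 7 := by
  rw [div_mul_eq_mul_div, div_le_div_iff₀ (by positivity) (by norm_num)]
  nlinarith

set_option maxHeartbeats 4000000 in
theorem hadamard_stmt13
    {V : Type*} [NormedAddCommGroup V] [InnerProductSpace ℝ V] [CompleteSpace V]
    {X : Type*} [NormedAddCommGroup X] [InnerProductSpace ℝ X] [CompleteSpace X]
    (ι : V →L[ℝ] X) (hι : Function.Injective ι) (hcompact : IsCompactOperator ι)
    (A : ℝ → V →ₗ[ℝ] V →ₗ[ℝ] ℝ) (B : ℝ → X →ₗ[ℝ] X →ₗ[ℝ] ℝ)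
    (hAsymm : ∀ t', ∀ u v : V, A t' u v = A t' v u)
    (hBsymm : ∀ t', ∀ u v : X, B t' u v = B t' v u)
    (CA : ℝ) (hAbdd : ∀ t', ∀ u v : V, |A t' u v| ≤ CA * ‖u‖ * ‖v‖)
    (CB : ℝ) (hBbdd : ∀ t', ∀ u v : X, |B t' u v| ≤ CB * ‖u‖ * ‖v‖)
    (δ : ℝ) (hδ : 0 < δ)
    (hAcoer : ∀ t', ∀ v : V, δ * ‖v‖ ^ 2 ≤ A t' v v)
    (hBcoer : ∀ t', ∀ v : X, δ * ‖v‖ ^ 2 ≤ B t' v v)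
    (t : ℝ)
    (A' : V →ₗ[ℝ] V →ₗ[ℝ] ℝ) (B' : X →ₗ[ℝ] X →ₗ[ℝ] ℝ)
    (CA' : ℝ) (hA'bdd : ∀ u v : V, |A' u v| ≤ CA' * ‖u‖ * ‖v‖)
    (CB' : ℝ) (hB'bdd : ∀ u v : X, |B' u v| ≤ CB' * ‖u‖ * ‖v‖)
    (hAder : ∀ ε > (0:ℝ), ∃ η > (0:ℝ), ∀ h : ℝ, h ≠ 0 → |h| < η →
      ∀ u v : V, ‖u‖ ≤ 1 → ‖v‖ ≤ 1 →
        |A (t + h) u v - A t u v - h * A' u v| ≤ ε * |h|)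
    (hBder : ∀ ε > (0:ℝ), ∃ η > (0:ℝ), ∀ h : ℝ, h ≠ 0 → |h| < η →
      ∀ u v : X, ‖u‖ ≤ 1 → ‖v‖ ≤ 1 →
        |B (t + h) u v - B t u v - h * B' u v| ≤ ε * |h|)
    (lam : ℕ → ℝ → ℝ) (u : ℕ → ℝ → V) (j : ℕ)
    (hnorm : ∀ t', B t' (ι (u j t')) (ι (u j t')) = 1)
    (heig : ∀ t', ∀ v : V, A t' (u j t') v = lam j t' * B t' (ι (u j t')) (ι v))
    (lambda : ℝ) (hlambda : lambda = lam j t)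
    (Y : Submodule ℝ V)
    (hYeig : ∀ w : V, w ∈ Y ↔ ∀ v : V, A t w v = lambda * B t (ι w) (ι v))
    (hCvanish : ∀ w ∈ Y, ∀ v : V, A t w v - lambda * B t (ι w) (ι v) = 0)
    -- `P = I − R`, `R` the `B_t`-orthogonal projection onto `Y`
    (P : V →L[ℝ] V)
    (hPY : ∀ v : V, v - P v ∈ Y)
    (hPorth : ∀ v : V, ∀ y ∈ Y, B t (ι (P v)) (ι y) = 0)
    (hseq : ℕ → ℝ) (hseq0 : ∀ ℓ, hseq ℓ ≠ 0)
    (hseqlim : Filter.Tendsto hseq Filter.atTop (nhds 0))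
    (φ : V) (hφY : φ ∈ Y)
    (hφlim : Filter.Tendsto (fun ℓ => u j (t + hseq ℓ)) Filter.atTop (nhds φ))
    (lamdot : ℝ)
    (hlamdot : Filter.Tendsto (fun ℓ => (lam j (t + hseq ℓ) - lam j t) / hseq ℓ)
      Filter.atTop (nhds lamdot)) :
    ∃ zstar : V,
      P zstar = zstar ∧
      (∀ v : V, P v = v →
        A t zstar v - lambda * B t (ι zstar) (ι v) =
          -(A' φ v - lamdot * B t (ι φ) (ι v) - lambda * B' (ι φ) (ι v))) ∧
      (∀ z' : V, P z' = z' →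
        (∀ v : V, P v = v →
          A t z' v - lambda * B t (ι z') (ι v) =
            -(A' φ v - lamdot * B t (ι φ) (ι v) - lambda * B' (ι φ) (ι v))) →
        z' = zstar) ∧
      Filter.Tendsto (fun ℓ => P ((hseq ℓ)⁻¹ • (u j (t + hseq ℓ) - φ)))
        Filter.atTop (nhds zstar) ∧
      (∀ v : V,
        A t zstar v - lambda * B t (ι zstar) (ι v) =
          -(A' φ v - lamdot * B t (ι φ) (ι v) - lambda * B' (ι φ) (ι v))) := by
  subst hlambda
  -- basic nonnegativity facts
  have hιu : ι (u j t) ≠ 0 := by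
    intro h0
    have := hnorm t
    rw [h0] at this
    simp at this
  have hιupos : (0:ℝ) < ‖ι (u j t)‖ := norm_pos_iff.mpr hιu
  have hupos : (0:ℝ) < ‖u j t‖ := by
    refine norm_pos_iff.mpr fun h0 => hιu ?_
    rw [h0, map_zero]
  have hCBpos : (0:ℝ) < CB := by
    have h1 := hBbdd t (ι (u j t)) (ι (u j t))
    rw [hnorm t, abs_one] at h1
    nlinarith [mul_pos hιupos hιupos]
  have hCApos : (0:ℝ) < CA := by
    have h1 := hAbdd t (u j t) (u j t)
    have h2 := hAcoer t (u j t)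
    nlinarith [le_abs_self (A t (u j t) (u j t)), mul_pos hupos hupos, sq_nonneg ‖u j t‖]
  have hCA'0 : (0:ℝ) ≤ CA' := by
    have h1 := hA'bdd (u j t) (u j t)
    nlinarith [abs_nonneg (A' (u j t) (u j t)), mul_pos hupos hupos]
  have hCB'0 : (0:ℝ) ≤ CB' := by
    have h1 := hB'bdd (ι (u j t)) (ι (u j t))
    nlinarith [abs_nonneg (B' (ι (u j t)) (ι (u j t))), mul_pos hιupos hιupos]
  -- the bilinear form C_t and its continuous version G
  have hMC0 : (0:ℝ) ≤ CA + |lam j t| * CB * ‖ι‖ ^ 2 := by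
    have h1 : (0:ℝ) ≤ |lam j t| * CB * ‖ι‖ ^ 2 :=
      mul_nonneg (mul_nonneg (abs_nonneg _) hCBpos.le) (by positivity)
    linarith
  have hGex : ∃ G : V →L[ℝ] V →L[ℝ] ℝ,
      (∀ z v : V, G z v = A t z v - lam j t * B t (ι z) (ι v)) ∧
      (∀ z : V, ‖G z‖ ≤ (CA + |lam j t| * CB * ‖ι‖ ^ 2) * ‖z‖) := by
    have hClin : ∀ z v : V,
        (A t - lam j t • ((B t).compl₁₂ (ι : V →ₗ[ℝ] X) (ι : V →ₗ[ℝ] X))) z v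
          = A t z v - lam j t * B t (ι z) (ι v) := by
      intro z v
      simp [LinearMap.sub_apply, LinearMap.smul_apply, LinearMap.compl₁₂_apply, smul_eq_mul]
    have hMC : ∀ z v : V,
        ‖(A t - lam j t • ((B t).compl₁₂ (ι : V →ₗ[ℝ] X) (ι : V →ₗ[ℝ] X))) z v‖
          ≤ (CA + |lam j t| * CB * ‖ι‖ ^ 2) * ‖z‖ * ‖v‖ := by
      intro z v
      rw [hClin, Real.norm_eq_abs]
      calc |A t z v - lam j t * B t (ι z) (ι v)|
          ≤ |A t z v| + |lam j t * B t (ι z) (ι v)| := abs_sub _ _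
        _ = |A t z v| + |lam j t| * |B t (ι z) (ι v)| := by rw [abs_mul]
        _ ≤ CA * ‖z‖ * ‖v‖ + |lam j t| * (CB * ‖ι z‖ * ‖ι v‖) := by
            have h1 := hAbdd t z v
            have h2 := mul_le_mul_of_nonneg_left (hBbdd t (ι z) (ι v)) (abs_nonneg (lam j t))
            linarith
        _ ≤ CA * ‖z‖ * ‖v‖ + |lam j t| * (CB * (‖ι‖ * ‖z‖) * (‖ι‖ * ‖v‖)) := by
            gcongr
            · exact ι.le_opNorm z
            · exact ι.le_opNorm v
        _ = (CA + |lam j t| * CB * ‖ι‖ ^ 2) * ‖z‖ * ‖v‖ := by ring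
    refine ⟨LinearMap.mkContinuous₂ _ _ hMC, fun z v => ?_, fun z => ?_⟩
    · rw [LinearMap.mkContinuous₂_apply, hClin]
    · refine ContinuousLinearMap.opNorm_le_bound _ (mul_nonneg hMC0 (norm_nonneg z))
        fun v => ?_
      rw [LinearMap.mkContinuous₂_apply]
      calc ‖(A t - lam j t • ((B t).compl₁₂ (ι : V →ₗ[ℝ] X) (ι : V →ₗ[ℝ] X))) z v‖
          ≤ (CA + |lam j t| * CB * ‖ι‖ ^ 2) * ‖z‖ * ‖v‖ := hMC z v
        _ = (CA + |lam j t| * CB * ‖ι‖ ^ 2) * ‖z‖ * ‖v‖ := rfl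
  obtain ⟨G, hGapp, hGbdd⟩ := hGex
  -- P kills Y
  have hYP : ∀ w ∈ Y, P w = 0 := by
    intro w hw
    have h1 : P w ∈ Y := by
      have h2 := Y.sub_mem hw (hPY w)
      rwa [sub_sub_cancel] at h2
    have h3 : B t (ι (P w)) (ι (P w)) = 0 := hPorth w (P w) h1
    have h4 := hBcoer t (ι (P w))
    rw [h3] at h4
    have h4' : ‖ι (P w)‖ ^ 2 ≤ 0 := by nlinarith
    have h5 : ‖ι (P w)‖ ≤ 0 := by nlinarith [norm_nonneg (ι (P w))]
    have h6 : ι (P w) = 0 := norm_le_zero_iff.mp h5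
    exact hι (by rw [h6, map_zero])
  have hPidem : ∀ v : V, P (P v) = P v := by
    intro v
    have h1 : P v - P (P v) ∈ Y := hPY (P v)
    have h2 : B t (ι (P v - P (P v))) (ι (P v - P (P v))) = 0 := by
      rw [show B t (ι (P v - P (P v))) = B t (ι (P v)) - B t (ι (P (P v))) from by
        rw [map_sub ι, map_sub]]
      rw [LinearMap.sub_apply, hPorth v _ h1, hPorth (P v) _ h1]
      ring
    have h4 := hBcoer t (ι (P v - P (P v)))
    rw [h2] at h4
    have h4' : ‖ι (P v - P (P v))‖ ^ 2 ≤ 0 := by nlinarith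
    have h5 : ‖ι (P v - P (P v))‖ ≤ 0 := by
      nlinarith [norm_nonneg (ι (P v - P (P v)))]
    have h6 : P v - P (P v) = 0 := hι (by rw [norm_le_zero_iff.mp h5, map_zero])
    have := sub_eq_zero.mp h6
    exact this.symm
  -- kernel of G on PV is trivial
  have hker : ∀ w : V, P w = w → G w = 0 → w = 0 := by
    intro w hPw hGw
    have hmem : w ∈ Y := by
      refine (hYeig w).mpr fun v => ?_
      have h1 : G w v = 0 := by rw [hGw]; rfl
      rw [hGapp] at h1
      linarith
    rw [← hPw]
    exact hYP w hmem
  -- the coercivity estimate needed for the abstract lemma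
  have hcoer : ∀ d : V, δ * ‖d‖ ^ 2 ≤ G d d + (|lam j t| * CB) * ‖ι d‖ ^ 2 := by
    intro d
    have h1 := hAcoer t d
    have h2 : lam j t * B t (ι d) (ι d) ≤ |lam j t| * (CB * ‖ι d‖ * ‖ι d‖) := by
      calc lam j t * B t (ι d) (ι d) ≤ |lam j t * B t (ι d) (ι d)| := le_abs_self _
        _ = |lam j t| * |B t (ι d) (ι d)| := abs_mul _ _
        _ ≤ |lam j t| * (CB * ‖ι d‖ * ‖ι d‖) :=
            mul_le_mul_of_nonneg_left (hBbdd t (ι d) (ι d)) (abs_nonneg _)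
    have h3 := hGapp d d
    nlinarith [sq_abs ‖ι d‖]
  obtain ⟨c, hc, hest⟩ := hadamard13_estimate ι hcompact G P δ (|lam j t| * CB) hδ
    (mul_nonneg (abs_nonneg _) hCBpos.le) hcoer hker
  -- scaled difference quotient bounds
  have hAquot : ∀ ε > (0:ℝ), ∃ η > (0:ℝ), ∀ h : ℝ, h ≠ 0 → |h| < η → ∀ u' v : V,
      |h⁻¹ * (A (t + h) u' v - A t u' v) - A' u' v| ≤ ε * ‖u'‖ * ‖v‖ := by
    intro ε hε
    obtain ⟨η, hη, hder⟩ := hAder ε hε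
    refine ⟨η, hη, fun h hh hhη u' v => ?_⟩
    have hb := hadamard13_bilin_scale (A (t + h) - A t - h • A') (ε * |h|)
      (by positivity) (fun a b ha hb => by
        simpa only [LinearMap.sub_apply, LinearMap.smul_apply, smul_eq_mul] using
          hder h hh hhη a b ha hb) u' v
    have h3 : (A (t + h) - A t - h • A') u' v
        = A (t + h) u' v - A t u' v - h * A' u' v := by
      simp only [LinearMap.sub_apply, LinearMap.smul_apply, smul_eq_mul]
    rw [h3] at hb
    have hh0 : |h| ≠ 0 := abs_ne_zero.mpr hh
    have key2 : h⁻¹ * (A (t + h) u' v - A t u' v) - A' u' v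
        = h⁻¹ * (A (t + h) u' v - A t u' v - h * A' u' v) := by
      field_simp
    rw [key2, abs_mul, abs_inv]
    calc |h|⁻¹ * |A (t + h) u' v - A t u' v - h * A' u' v|
        ≤ |h|⁻¹ * (ε * |h| * ‖u'‖ * ‖v‖) :=
          mul_le_mul_of_nonneg_left hb (by positivity)
      _ = ε * ‖u'‖ * ‖v‖ := by field_simp
  have hBquot : ∀ ε > (0:ℝ), ∃ η > (0:ℝ), ∀ h : ℝ, h ≠ 0 → |h| < η → ∀ x y : X,
      |h⁻¹ * (B (t + h) x y - B t x y) - B' x y| ≤ ε * ‖x‖ * ‖y‖ := by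
    intro ε hε
    obtain ⟨η, hη, hder⟩ := hBder ε hε
    refine ⟨η, hη, fun h hh hhη x y => ?_⟩
    have hb := hadamard13_bilin_scale (B (t + h) - B t - h • B') (ε * |h|)
      (by positivity) (fun a b ha hb => by
        simpa only [LinearMap.sub_apply, LinearMap.smul_apply, smul_eq_mul] using
          hder h hh hhη a b ha hb) x y
    have h3 : (B (t + h) - B t - h • B') x y
        = B (t + h) x y - B t x y - h * B' x y := by
      simp only [LinearMap.sub_apply, LinearMap.smul_apply, smul_eq_mul]
    rw [h3] at hb
    have hh0 : |h| ≠ 0 := abs_ne_zero.mpr hh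
    have key2 : h⁻¹ * (B (t + h) x y - B t x y) - B' x y
        = h⁻¹ * (B (t + h) x y - B t x y - h * B' x y) := by
      field_simp
    rw [key2, abs_mul, abs_inv]
    calc |h|⁻¹ * |B (t + h) x y - B t x y - h * B' x y|
        ≤ |h|⁻¹ * (ε * |h| * ‖x‖ * ‖y‖) :=
          mul_le_mul_of_nonneg_left hb (by positivity)
      _ = ε * ‖x‖ * ‖y‖ := by field_simp
  -- convergence of the eigenvalues
  have hlamconv : Filter.Tendsto (fun ℓ => lam j (t + hseq ℓ)) Filter.atTop
      (𝓝 (lam j t)) := by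
    have h1 : Filter.Tendsto
        (fun ℓ => (lam j (t + hseq ℓ) - lam j t) / hseq ℓ * hseq ℓ + lam j t)
        Filter.atTop (𝓝 (lamdot * 0 + lam j t)) :=
      (hlamdot.mul hseqlim).add tendsto_const_nhds
    rw [mul_zero, zero_add] at h1
    refine h1.congr fun ℓ => ?_
    rw [div_mul_cancel₀ _ (hseq0 ℓ)]
    ring
  -- the formula for G applied to the difference quotients
  have hGz : ∀ (ℓ : ℕ) (v : V),
      G ((hseq ℓ)⁻¹ • (u j (t + hseq ℓ) - φ)) v
        = (hseq ℓ)⁻¹ * (A t (u j (t + hseq ℓ)) v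
            - lam j t * B t (ι (u j (t + hseq ℓ))) (ι v)) := by
    intro ℓ v
    rw [hGapp]
    have hφ0 := hCvanish φ hφY v
    simp only [map_smul, map_sub, LinearMap.smul_apply, LinearMap.sub_apply, smul_eq_mul,
      ContinuousLinearMap.map_smul, ContinuousLinearMap.map_sub]
    linear_combination (-(hseq ℓ)⁻¹) * hφ0
  -- the limiting functional F
  have hFex : ∃ F : V →L[ℝ] ℝ, ∀ v : V,
      F v = lamdot * B t (ι φ) (ι v) + lam j t * B' (ι φ) (ι v) - A' φ v := by
    set Flin : V →ₗ[ℝ] ℝ := lamdot • ((B t (ι φ)).comp (ι : V →ₗ[ℝ] X))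
      + lam j t • ((B' (ι φ)).comp (ι : V →ₗ[ℝ] X)) - A' φ with hFlin
    have happ : ∀ v : V, Flin v = lamdot * B t (ι φ) (ι v) + lam j t * B' (ι φ) (ι v)
        - A' φ v := by
      intro v
      simp [hFlin, LinearMap.add_apply, LinearMap.sub_apply, LinearMap.smul_apply,
        LinearMap.comp_apply, smul_eq_mul]
    refine ⟨Flin.mkContinuous
      (|lamdot| * (CB * ‖ι φ‖ * ‖ι‖) + |lam j t| * (CB' * ‖ι φ‖ * ‖ι‖) + CA' * ‖φ‖)
      (fun v => ?_), fun v => by rw [LinearMap.mkContinuous_apply, happ]⟩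
    rw [Real.norm_eq_abs, happ]
    have a1 : |lamdot * B t (ι φ) (ι v)| ≤ |lamdot| * (CB * ‖ι φ‖ * (‖ι‖ * ‖v‖)) := by
      rw [abs_mul]
      refine mul_le_mul_of_nonneg_left ((hBbdd t _ _).trans ?_) (abs_nonneg _)
      exact mul_le_mul_of_nonneg_left (ι.le_opNorm v)
        (mul_nonneg hCBpos.le (norm_nonneg _))
    have a2 : |lam j t * B' (ι φ) (ι v)| ≤ |lam j t| * (CB' * ‖ι φ‖ * (‖ι‖ * ‖v‖)) := by
      rw [abs_mul]
      refine mul_le_mul_of_nonneg_left ((hB'bdd _ _).trans ?_) (abs_nonneg _)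
      exact mul_le_mul_of_nonneg_left (ι.le_opNorm v)
        (mul_nonneg hCB'0 (norm_nonneg _))
    have a3 : |A' φ v| ≤ CA' * ‖φ‖ * ‖v‖ := hA'bdd φ v
    have habs : |lamdot * B t (ι φ) (ι v) + lam j t * B' (ι φ) (ι v) - A' φ v|
        ≤ |lamdot * B t (ι φ) (ι v)| + |lam j t * B' (ι φ) (ι v)| + |A' φ v| := by
      calc |lamdot * B t (ι φ) (ι v) + lam j t * B' (ι φ) (ι v) - A' φ v|
          ≤ |lamdot * B t (ι φ) (ι v) + lam j t * B' (ι φ) (ι v)| + |A' φ v| := abs_sub _ _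
        _ ≤ |lamdot * B t (ι φ) (ι v)| + |lam j t * B' (ι φ) (ι v)| + |A' φ v| := by
            linarith [abs_add_le (lamdot * B t (ι φ) (ι v)) (lam j t * B' (ι φ) (ι v))]
    calc |lamdot * B t (ι φ) (ι v) + lam j t * B' (ι φ) (ι v) - A' φ v|
        ≤ |lamdot| * (CB * ‖ι φ‖ * (‖ι‖ * ‖v‖)) + |lam j t| * (CB' * ‖ι φ‖ * (‖ι‖ * ‖v‖))
          + CA' * ‖φ‖ * ‖v‖ := by linarith
      _ = (|lamdot| * (CB * ‖ι φ‖ * ‖ι‖) + |lam j t| * (CB' * ‖ι φ‖ * ‖ι‖) + CA' * ‖φ‖)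
          * ‖v‖ := by ring
  obtain ⟨F, hFapp⟩ := hFex
  -- the main quantitative convergence estimate
  have key : ∀ ε > (0:ℝ), ∀ᶠ ℓ in Filter.atTop,
      ‖G ((hseq ℓ)⁻¹ • (u j (t + hseq ℓ) - φ)) - F‖ ≤ ε := by
    intro ε hε
    have hMp : (0:ℝ) < ‖φ‖ + 1 := by positivity
    obtain ⟨ηA, hηA, hA⟩ := hAquot (ε / (7 * (‖φ‖ + 1))) (by positivity)
    obtain ⟨ηB, hηB, hB⟩ := hBquot
      (ε / (7 * ((|lam j t| + 1) * ((‖ι‖ ^ 2 + 1) * (‖φ‖ + 1))))) (by positivity)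
    set KW := CA' + |lam j t| * CB' * ‖ι‖ ^ 2 + |lamdot| * CB * ‖ι‖ ^ 2 with hKW
    have hKW0 : (0:ℝ) ≤ KW := by
      have i1 : (0:ℝ) ≤ |lam j t| * CB' * ‖ι‖ ^ 2 :=
        mul_nonneg (mul_nonneg (abs_nonneg _) hCB'0) (by positivity)
      have i2 : (0:ℝ) ≤ |lamdot| * CB * ‖ι‖ ^ 2 :=
        mul_nonneg (mul_nonneg (abs_nonneg _) hCBpos.le) (by positivity)
      rw [hKW]; linarith
    set D4 := CB' * ‖ι‖ ^ 2 * (‖φ‖ + 1) with hD4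
    have hD40 : (0:ℝ) ≤ D4 := by
      rw [hD4]; exact mul_nonneg (mul_nonneg hCB'0 (by positivity)) hMp.le
    set D5 := CB * ‖ι‖ ^ 2 * (‖φ‖ + 1) with hD5
    have hD50 : (0:ℝ) ≤ D5 := by
      rw [hD5]; exact mul_nonneg (mul_nonneg hCBpos.le (by positivity)) hMp.le
    have ev1 : ∀ᶠ ℓ in Filter.atTop, |hseq ℓ| < min ηA ηB := by
      have h0 := Metric.tendsto_nhds.mp hseqlim (min ηA ηB) (lt_min hηA hηB)
      exact h0.mono fun ℓ h => by rwa [Real.dist_eq, sub_zero] at h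
    have ev2 : ∀ᶠ ℓ in Filter.atTop,
        ‖u j (t + hseq ℓ) - φ‖ < min 1 (ε / (7 * (KW + 1))) := by
      have hpos : (0:ℝ) < ε / (7 * (KW + 1)) := div_pos hε (by linarith)
      have h0 := Metric.tendsto_nhds.mp hφlim _ (lt_min one_pos hpos)
      exact h0.mono fun ℓ h => by rwa [dist_eq_norm] at h
    have ev3 : ∀ᶠ ℓ in Filter.atTop,
        |lam j (t + hseq ℓ) - lam j t| < min 1 (ε / (7 * (D4 + 1))) := by
      have hpos : (0:ℝ) < ε / (7 * (D4 + 1)) := div_pos hε (by linarith)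
      have h0 := Metric.tendsto_nhds.mp hlamconv _ (lt_min one_pos hpos)
      exact h0.mono fun ℓ h => by rwa [Real.dist_eq] at h
    have ev4 : ∀ᶠ ℓ in Filter.atTop,
        |(lam j (t + hseq ℓ) - lam j t) / hseq ℓ - lamdot| < ε / (7 * (D5 + 1)) := by
      have hpos : (0:ℝ) < ε / (7 * (D5 + 1)) := div_pos hε (by linarith)
      have h0 := Metric.tendsto_nhds.mp hlamdot _ hpos
      exact h0.mono fun ℓ h => by rwa [Real.dist_eq] at h
    filter_upwards [ev1, ev2, ev3, ev4] with ℓ h1 h2 h3 h4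
    refine ContinuousLinearMap.opNorm_le_bound _ hε.le fun v => ?_
    rw [ContinuousLinearMap.sub_apply, hGz ℓ v, hFapp v, Real.norm_eq_abs]
    set hh := hseq ℓ with hhdef
    set uh := u j (t + hh) with huhdef
    set lh := lam j (t + hh) with hlhdef
    have e1 := hA hh (hseq0 ℓ) (lt_of_lt_of_le h1 (min_le_left _ _)) uh v
    have e3 := hB hh (hseq0 ℓ) (lt_of_lt_of_le h1 (min_le_right _ _)) (ι uh) (ι v)
    have e2 : |A' uh v - A' φ v| ≤ CA' * ‖uh - φ‖ * ‖v‖ := by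
      have h5 := hA'bdd (uh - φ) v
      have h6 : A' (uh - φ) v = A' uh v - A' φ v := by
        simp only [map_sub, LinearMap.sub_apply]
      rwa [h6] at h5
    have e4b : |B' (ι uh) (ι v) - B' (ι φ) (ι v)|
        ≤ CB' * (‖ι‖ * ‖uh - φ‖) * (‖ι‖ * ‖v‖) := by
      have h5 := hB'bdd (ι uh - ι φ) (ι v)
      have h6 : B' (ι uh - ι φ) (ι v) = B' (ι uh) (ι v) - B' (ι φ) (ι v) := by
        simp only [map_sub, LinearMap.sub_apply]
      rw [h6] at h5
      refine h5.trans ?_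
      have h7 : ‖ι uh - ι φ‖ ≤ ‖ι‖ * ‖uh - φ‖ := by
        rw [← map_sub]; exact ι.le_opNorm _
      calc CB' * ‖ι uh - ι φ‖ * ‖ι v‖
          ≤ CB' * (‖ι‖ * ‖uh - φ‖) * ‖ι v‖ :=
            mul_le_mul_of_nonneg_right (mul_le_mul_of_nonneg_left h7 hCB'0) (norm_nonneg _)
        _ ≤ CB' * (‖ι‖ * ‖uh - φ‖) * (‖ι‖ * ‖v‖) :=
            mul_le_mul_of_nonneg_left (ι.le_opNorm v)
              (mul_nonneg hCB'0 (mul_nonneg (norm_nonneg _) (norm_nonneg _)))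
    have e5b : |B t (ι uh) (ι v) - B t (ι φ) (ι v)|
        ≤ CB * (‖ι‖ * ‖uh - φ‖) * (‖ι‖ * ‖v‖) := by
      have h5 := hBbdd t (ι uh - ι φ) (ι v)
      have h6 : B t (ι uh - ι φ) (ι v) = B t (ι uh) (ι v) - B t (ι φ) (ι v) := by
        simp only [map_sub, LinearMap.sub_apply]
      rw [h6] at h5
      refine h5.trans ?_
      have h7 : ‖ι uh - ι φ‖ ≤ ‖ι‖ * ‖uh - φ‖ := by
        rw [← map_sub]; exact ι.le_opNorm _
      calc CB * ‖ι uh - ι φ‖ * ‖ι v‖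
          ≤ CB * (‖ι‖ * ‖uh - φ‖) * ‖ι v‖ :=
            mul_le_mul_of_nonneg_right (mul_le_mul_of_nonneg_left h7 hCBpos.le)
              (norm_nonneg _)
        _ ≤ CB * (‖ι‖ * ‖uh - φ‖) * (‖ι‖ * ‖v‖) :=
            mul_le_mul_of_nonneg_left (ι.le_opNorm v)
              (mul_nonneg hCBpos.le (mul_nonneg (norm_nonneg _) (norm_nonneg _)))
    have huhb : ‖uh‖ ≤ ‖φ‖ + 1 := by
      have h5 : ‖uh - φ‖ < 1 := lt_of_lt_of_le h2 (min_le_left _ _)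
      have h6 := norm_sub_norm_le uh φ
      linarith
    have hlhb : |lh| ≤ |lam j t| + 1 := by
      have h5 : |lh - lam j t| < 1 := lt_of_lt_of_le h3 (min_le_left _ _)
      have h6 := abs_sub_abs_le_abs_sub lh (lam j t)
      linarith
    have hιuhb : ‖ι uh‖ ≤ ‖ι‖ * (‖φ‖ + 1) :=
      (ι.le_opNorm uh).trans (mul_le_mul_of_nonneg_left huhb (norm_nonneg _))
    -- the decomposition identity
    have hident : hh⁻¹ * (A t uh v - lam j t * B t (ι uh) (ι v))
        - (lamdot * B t (ι φ) (ι v) + lam j t * B' (ι φ) (ι v) - A' φ v)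
        = -(hh⁻¹ * (A (t + hh) uh v - A t uh v) - A' uh v)
          + -(A' uh v - A' φ v)
          + lh * (hh⁻¹ * (B (t + hh) (ι uh) (ι v) - B t (ι uh) (ι v)) - B' (ι uh) (ι v))
          + (lh - lam j t) * B' (ι uh) (ι v)
          + lam j t * (B' (ι uh) (ι v) - B' (ι φ) (ι v))
          + ((lh - lam j t) / hh - lamdot) * B t (ι uh) (ι v)
          + lamdot * (B t (ι uh) (ι v) - B t (ι φ) (ι v)) := by
      have he := heig (t + hh) v
      rw [← huhdef, ← hlhdef] at he
      linear_combination hh⁻¹ * he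
    rw [hident]
    have hB'xy : |B' (ι uh) (ι v)| ≤ CB' * (‖ι‖ * (‖φ‖ + 1)) * (‖ι‖ * ‖v‖) := by
      refine (hB'bdd _ _).trans ?_
      calc CB' * ‖ι uh‖ * ‖ι v‖
          ≤ CB' * (‖ι‖ * (‖φ‖ + 1)) * ‖ι v‖ :=
            mul_le_mul_of_nonneg_right (mul_le_mul_of_nonneg_left hιuhb hCB'0)
              (norm_nonneg _)
        _ ≤ CB' * (‖ι‖ * (‖φ‖ + 1)) * (‖ι‖ * ‖v‖) :=
            mul_le_mul_of_nonneg_left (ι.le_opNorm v)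
              (mul_nonneg hCB'0 (mul_nonneg (norm_nonneg _) hMp.le))
    have hBxy : |B t (ι uh) (ι v)| ≤ CB * (‖ι‖ * (‖φ‖ + 1)) * (‖ι‖ * ‖v‖) := by
      refine (hBbdd t _ _).trans ?_
      calc CB * ‖ι uh‖ * ‖ι v‖
          ≤ CB * (‖ι‖ * (‖φ‖ + 1)) * ‖ι v‖ :=
            mul_le_mul_of_nonneg_right (mul_le_mul_of_nonneg_left hιuhb hCBpos.le)
              (norm_nonneg _)
        _ ≤ CB * (‖ι‖ * (‖φ‖ + 1)) * (‖ι‖ * ‖v‖) :=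
            mul_le_mul_of_nonneg_left (ι.le_opNorm v)
              (mul_nonneg hCBpos.le (mul_nonneg (norm_nonneg _) hMp.le))
    have b1 : |-(hh⁻¹ * (A (t + hh) uh v - A t uh v) - A' uh v)| ≤ ε / 7 * ‖v‖ := by
      rw [abs_neg]
      refine e1.trans ?_
      calc ε / (7 * (‖φ‖ + 1)) * ‖uh‖ * ‖v‖
          ≤ ε / (7 * (‖φ‖ + 1)) * (‖φ‖ + 1) * ‖v‖ :=
            mul_le_mul_of_nonneg_right
              (mul_le_mul_of_nonneg_left huhb (by positivity)) (norm_nonneg v)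
        _ ≤ ε / 7 * ‖v‖ :=
            mul_le_mul_of_nonneg_right
              (hadamard13_budget ε (‖φ‖ + 1) (‖φ‖ + 1) hε hMp.le le_rfl hMp)
              (norm_nonneg v)
    have b3 : |lh * (hh⁻¹ * (B (t + hh) (ι uh) (ι v) - B t (ι uh) (ι v)) - B' (ι uh) (ι v))|
        ≤ ε / 7 * ‖v‖ := by
      rw [abs_mul]
      calc |lh| * |hh⁻¹ * (B (t + hh) (ι uh) (ι v) - B t (ι uh) (ι v)) - B' (ι uh) (ι v)|
          ≤ (|lam j t| + 1) * (ε / (7 * ((|lam j t| + 1) * ((‖ι‖ ^ 2 + 1) * (‖φ‖ + 1))))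
              * ‖ι uh‖ * ‖ι v‖) :=
            mul_le_mul hlhb e3 (abs_nonneg _) (by positivity)
        _ ≤ (|lam j t| + 1) * (ε / (7 * ((|lam j t| + 1) * ((‖ι‖ ^ 2 + 1) * (‖φ‖ + 1))))
              * (‖ι‖ * (‖φ‖ + 1)) * (‖ι‖ * ‖v‖)) := by
            gcongr <;> first
              | exact ι.le_opNorm v
              | exact hιuhb
        _ = ε / (7 * ((|lam j t| + 1) * ((‖ι‖ ^ 2 + 1) * (‖φ‖ + 1))))
              * ((|lam j t| + 1) * (‖ι‖ ^ 2 * (‖φ‖ + 1))) * ‖v‖ := by ring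
        _ ≤ ε / (7 * ((|lam j t| + 1) * ((‖ι‖ ^ 2 + 1) * (‖φ‖ + 1))))
              * ((|lam j t| + 1) * ((‖ι‖ ^ 2 + 1) * (‖φ‖ + 1))) * ‖v‖ := by
            refine mul_le_mul_of_nonneg_right
              (mul_le_mul_of_nonneg_left ?_ (by positivity)) (norm_nonneg v)
            refine mul_le_mul_of_nonneg_left ?_ (by positivity)
            exact mul_le_mul_of_nonneg_right (by linarith) hMp.le
        _ ≤ ε / 7 * ‖v‖ :=
            mul_le_mul_of_nonneg_right
              (hadamard13_budget ε ((|lam j t| + 1) * ((‖ι‖ ^ 2 + 1) * (‖φ‖ + 1))) _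
                hε (by positivity) le_rfl (by positivity)) (norm_nonneg v)
    have b4 : |(lh - lam j t) * B' (ι uh) (ι v)| ≤ ε / 7 * ‖v‖ := by
      rw [abs_mul]
      have m1 : |lh - lam j t| ≤ ε / (7 * (D4 + 1)) :=
        (lt_of_lt_of_le h3 (min_le_right _ _)).le
      calc |lh - lam j t| * |B' (ι uh) (ι v)|
          ≤ ε / (7 * (D4 + 1)) * (CB' * (‖ι‖ * (‖φ‖ + 1)) * (‖ι‖ * ‖v‖)) :=
            mul_le_mul m1 hB'xy (abs_nonneg _)
              (le_of_lt (div_pos hε (by linarith)))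
        _ = ε / (7 * (D4 + 1)) * (CB' * ‖ι‖ ^ 2 * (‖φ‖ + 1)) * ‖v‖ := by ring
        _ = ε / (7 * (D4 + 1)) * D4 * ‖v‖ := by rw [← hD4]
        _ ≤ ε / 7 * ‖v‖ :=
            mul_le_mul_of_nonneg_right
              (hadamard13_budget ε D4 (D4 + 1) hε hD40 (by linarith) (by linarith))
              (norm_nonneg v)
    have b5 : |((lh - lam j t) / hh - lamdot) * B t (ι uh) (ι v)| ≤ ε / 7 * ‖v‖ := by
      rw [abs_mul]
      calc |(lh - lam j t) / hh - lamdot| * |B t (ι uh) (ι v)|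
          ≤ ε / (7 * (D5 + 1)) * (CB * (‖ι‖ * (‖φ‖ + 1)) * (‖ι‖ * ‖v‖)) :=
            mul_le_mul h4.le hBxy (abs_nonneg _)
              (le_of_lt (div_pos hε (by linarith)))
        _ = ε / (7 * (D5 + 1)) * (CB * ‖ι‖ ^ 2 * (‖φ‖ + 1)) * ‖v‖ := by ring
        _ = ε / (7 * (D5 + 1)) * D5 * ‖v‖ := by rw [← hD5]
        _ ≤ ε / 7 * ‖v‖ :=
            mul_le_mul_of_nonneg_right
              (hadamard13_budget ε D5 (D5 + 1) hε hD50 (by linarith) (by linarith))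
              (norm_nonneg v)
    have w1 : |-(A' uh v - A' φ v)| ≤ CA' * ‖uh - φ‖ * ‖v‖ := by rw [abs_neg]; exact e2
    have w2 : |lam j t * (B' (ι uh) (ι v) - B' (ι φ) (ι v))|
        ≤ |lam j t| * (CB' * (‖ι‖ * ‖uh - φ‖) * (‖ι‖ * ‖v‖)) := by
      rw [abs_mul]; exact mul_le_mul_of_nonneg_left e4b (abs_nonneg _)
    have w3 : |lamdot * (B t (ι uh) (ι v) - B t (ι φ) (ι v))|
        ≤ |lamdot| * (CB * (‖ι‖ * ‖uh - φ‖) * (‖ι‖ * ‖v‖)) := by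
      rw [abs_mul]; exact mul_le_mul_of_nonneg_left e5b (abs_nonneg _)
    have hWsum : CA' * ‖uh - φ‖ * ‖v‖
        + |lam j t| * (CB' * (‖ι‖ * ‖uh - φ‖) * (‖ι‖ * ‖v‖))
        + |lamdot| * (CB * (‖ι‖ * ‖uh - φ‖) * (‖ι‖ * ‖v‖)) ≤ ε / 7 * ‖v‖ := by
      have hWρ : ‖uh - φ‖ ≤ ε / (7 * (KW + 1)) :=
        (lt_of_lt_of_le h2 (min_le_right _ _)).le
      have heq : CA' * ‖uh - φ‖ * ‖v‖
          + |lam j t| * (CB' * (‖ι‖ * ‖uh - φ‖) * (‖ι‖ * ‖v‖))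
          + |lamdot| * (CB * (‖ι‖ * ‖uh - φ‖) * (‖ι‖ * ‖v‖))
          = KW * ‖uh - φ‖ * ‖v‖ := by rw [hKW]; ring
      rw [heq]
      calc KW * ‖uh - φ‖ * ‖v‖
          ≤ KW * (ε / (7 * (KW + 1))) * ‖v‖ :=
            mul_le_mul_of_nonneg_right (mul_le_mul_of_nonneg_left hWρ hKW0)
              (norm_nonneg v)
        _ = ε / (7 * (KW + 1)) * KW * ‖v‖ := by ring
        _ ≤ ε / 7 * ‖v‖ :=
            mul_le_mul_of_nonneg_right
              (hadamard13_budget ε KW (KW + 1) hε hKW0 (by linarith) (by linarith))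
              (norm_nonneg v)
    obtain ⟨l1, r1⟩ := abs_le.mp b1
    obtain ⟨l2, r2⟩ := abs_le.mp w1
    obtain ⟨l3, r3⟩ := abs_le.mp b3
    obtain ⟨l4, r4⟩ := abs_le.mp b4
    obtain ⟨l5, r5⟩ := abs_le.mp w2
    obtain ⟨l6, r6⟩ := abs_le.mp b5
    obtain ⟨l7, r7⟩ := abs_le.mp w3
    exact abs_le.mpr ⟨by linarith, by linarith⟩
  have hGF : Filter.Tendsto (fun ℓ => G ((hseq ℓ)⁻¹ • (u j (t + hseq ℓ) - φ)))
      Filter.atTop (𝓝 F) := by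
    rw [Metric.tendsto_atTop]
    intro ε hε
    obtain ⟨N, hN⟩ := Filter.eventually_atTop.mp (key (ε / 2) (by linarith))
    exact ⟨N, fun n hn => by rw [dist_eq_norm]; linarith [hN n hn]⟩
  have hGy : ∀ ℓ : ℕ, G (P ((hseq ℓ)⁻¹ • (u j (t + hseq ℓ) - φ)))
      = G ((hseq ℓ)⁻¹ • (u j (t + hseq ℓ) - φ)) := by
    intro ℓ
    ext v
    set z := (hseq ℓ)⁻¹ • (u j (t + hseq ℓ) - φ) with hz
    have h0 := hCvanish (z - P z) (hPY z) v
    have h1 : G (z - P z) v = A t (z - P z) v - lam j t * B t (ι (z - P z)) (ι v) :=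
      hGapp _ _
    have h2 : G (z - P z) v = G z v - G (P z) v := by
      rw [show G (z - P z) = G z - G (P z) from map_sub G _ _,
        ContinuousLinearMap.sub_apply]
    linarith
  have hycauchy : CauchySeq (fun ℓ => P ((hseq ℓ)⁻¹ • (u j (t + hseq ℓ) - φ))) := by
    rw [Metric.cauchySeq_iff]
    intro ε hε
    obtain ⟨N, hN⟩ := Metric.cauchySeq_iff.mp hGF.cauchySeq (c * ε) (mul_pos hc hε)
    refine ⟨N, fun m hm n hn => ?_⟩
    have hP' : P (P ((hseq m)⁻¹ • (u j (t + hseq m) - φ))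
        - P ((hseq n)⁻¹ • (u j (t + hseq n) - φ)))
        = P ((hseq m)⁻¹ • (u j (t + hseq m) - φ))
          - P ((hseq n)⁻¹ • (u j (t + hseq n) - φ)) := by
      rw [map_sub, hPidem, hPidem]
    have hd := hest _ hP'
    have h2 : G (P ((hseq m)⁻¹ • (u j (t + hseq m) - φ))
        - P ((hseq n)⁻¹ • (u j (t + hseq n) - φ)))
        = G ((hseq m)⁻¹ • (u j (t + hseq m) - φ))
          - G ((hseq n)⁻¹ • (u j (t + hseq n) - φ)) := by
      rw [map_sub, hGy, hGy]
    rw [h2] at hd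
    have h3 := hN m hm n hn
    rw [dist_eq_norm] at h3 ⊢
    have h4 : c * ‖P ((hseq m)⁻¹ • (u j (t + hseq m) - φ))
        - P ((hseq n)⁻¹ • (u j (t + hseq n) - φ))‖ < c * ε := lt_of_le_of_lt hd h3
    exact (mul_lt_mul_iff_right₀ hc).mp h4
  obtain ⟨zstar, hzstar⟩ := cauchySeq_tendsto_of_complete hycauchy
  have hPzstar : P zstar = zstar := by
    have t1 : Filter.Tendsto (fun ℓ => P (P ((hseq ℓ)⁻¹ • (u j (t + hseq ℓ) - φ))))
        Filter.atTop (𝓝 (P zstar)) := (P.continuous.tendsto zstar).comp hzstar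
    have t2 : Filter.Tendsto (fun ℓ => P (P ((hseq ℓ)⁻¹ • (u j (t + hseq ℓ) - φ))))
        Filter.atTop (𝓝 zstar) := by
      have he : (fun ℓ => P (P ((hseq ℓ)⁻¹ • (u j (t + hseq ℓ) - φ))))
          = fun ℓ => P ((hseq ℓ)⁻¹ • (u j (t + hseq ℓ) - φ)) := funext fun ℓ => hPidem _
      rw [he]; exact hzstar
    exact tendsto_nhds_unique t1 t2
  have hGzstarF : G zstar = F := by
    have t1 : Filter.Tendsto (fun ℓ => G (P ((hseq ℓ)⁻¹ • (u j (t + hseq ℓ) - φ))))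
        Filter.atTop (𝓝 (G zstar)) := (G.continuous.tendsto zstar).comp hzstar
    have t2 : Filter.Tendsto (fun ℓ => G (P ((hseq ℓ)⁻¹ • (u j (t + hseq ℓ) - φ))))
        Filter.atTop (𝓝 F) := by
      have he : (fun ℓ => G (P ((hseq ℓ)⁻¹ • (u j (t + hseq ℓ) - φ))))
          = fun ℓ => G ((hseq ℓ)⁻¹ • (u j (t + hseq ℓ) - φ)) := funext fun ℓ => hGy ℓ
      rw [he]; exact hGF
    exact tendsto_nhds_unique t1 t2
  have hzid : ∀ v : V, A t zstar v - lam j t * B t (ι zstar) (ι v)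
      = -(A' φ v - lamdot * B t (ι φ) (ι v) - lam j t * B' (ι φ) (ι v)) := by
    intro v
    have h1 : G zstar v = F v := by rw [hGzstarF]
    rw [hGapp, hFapp] at h1
    linarith
  refine ⟨zstar, hPzstar, fun v _ => hzid v, ?_, hzstar, hzid⟩
  intro z' hPz' hid'
  have hdv : ∀ v : V, G (z' - zstar) v = 0 := by
    intro v
    have hv1 : G (z' - zstar) (P v) = 0 := by
      have h2 : G (z' - zstar) (P v) = G z' (P v) - G zstar (P v) := by
        rw [show G (z' - zstar) = G z' - G zstar from map_sub G _ _,
          ContinuousLinearMap.sub_apply]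
      rw [h2, hGapp, hGapp]
      have e1 := hid' (P v) (hPidem v)
      have e2 := hzid (P v)
      linarith
    have hv2 : G (z' - zstar) (v - P v) = 0 := by
      rw [hGapp]
      have hsy : A t (z' - zstar) (v - P v)
          - lam j t * B t (ι (z' - zstar)) (ι (v - P v))
          = A t (v - P v) (z' - zstar)
            - lam j t * B t (ι (v - P v)) (ι (z' - zstar)) := by
        rw [hAsymm t, hBsymm t]
      rw [hsy]
      exact hCvanish _ (hPY v) _
    have h3 : G (z' - zstar) v = G (z' - zstar) (P v) + G (z' - zstar) (v - P v) := by
      rw [← map_add]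
      congr 1
      abel
    rw [h3, hv1, hv2, add_zero]
  have hGd : G (z' - zstar) = 0 := by
    ext v
    rw [hdv v]
    simp
  have h5 := hest (z' - zstar) (by rw [map_sub, hPz', hPzstar])
  rw [hGd, norm_zero] at h5
  have h6 : ‖z' - zstar‖ ≤ 0 := by nlinarith
  exact sub_eq_zero.mp (norm_le_zero_iff.mp h6)
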